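/- Let ρ, A, B be PSD n×n complex matrices with AB = BA, and let s ≤ p be natural numbers with p ≥ 1. Then tr(ρ·Aˢ·B^(p−s)) is a nonnegative real number and tr(ρ·Aˢ·B^(p−s)) ≤ ( tr(ρ·A^p) )^(s/p) · ( tr(ρ·B^p) )^((p−s)/p), where the outer exponents are real powers of the nonnegative real traces. -/

import Mathlib

open scoped Matrix ComplexOrder
open Finset

variable {m : Type*} [Fintype m] [DecidableEq m]

/-- If `M` commutes with `diagonal d` and `e` is a "function of `d`", then `M` commutes
with `diagonal e`. -/
lemma commute_diagonal_of {M : Matrix m m ℂ} {d e : m → ℂ}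
    (h : M * Matrix.diagonal d = Matrix.diagonal d * M)
    (he : ∀ i j, d i = d j → e i = e j) :
    M * Matrix.diagonal e = Matrix.diagonal e * M := by
  ext i j
  have h' : (M * Matrix.diagonal d) i j = (Matrix.diagonal d * M) i j := by rw [h]
  rw [Matrix.mul_diagonal, Matrix.diagonal_mul] at h'
  rw [Matrix.mul_diagonal, Matrix.diagonal_mul]
  rcases eq_or_ne (d i) (d j) with hd | hd
  · rw [he i j hd, mul_comm]
  · have hz : M i j * (d j - d i) = 0 := by rw [mul_sub]; linear_combination h'
    rcases mul_eq_zero.mp hz with hM | hdd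
    · simp [hM]
    · exact absurd (by linear_combination hdd : d j = d i) (Ne.symm hd)

namespace Matrix.PosSemidef

/-- The PSD square root (as in the older Mathlib). -/
noncomputable def sqrt {A : Matrix m m ℂ} (hA : A.PosSemidef) : Matrix m m ℂ :=
  (hA.1.eigenvectorUnitary : Matrix m m ℂ) *
    Matrix.diagonal ((↑) ∘ Real.sqrt ∘ hA.1.eigenvalues) *
    star (hA.1.eigenvectorUnitary : Matrix m m ℂ)

lemma posSemidef_sqrt {A : Matrix m m ℂ} (hA : A.PosSemidef) : hA.sqrt.PosSemidef := by
  have hd : (Matrix.diagonal ((↑) ∘ Real.sqrt ∘ hA.1.eigenvalues : m → ℂ)).PosSemidef :=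
    Matrix.PosSemidef.diagonal fun i => Complex.zero_le_real.mpr (Real.sqrt_nonneg _)
  have := hd.mul_mul_conjTranspose_same (hA.1.eigenvectorUnitary : Matrix m m ℂ)
  rwa [← Matrix.star_eq_conjTranspose] at this

lemma sqrt_mul_self {A : Matrix m m ℂ} (hA : A.PosSemidef) : hA.sqrt * hA.sqrt = A := by
  have hU' : star (hA.1.eigenvectorUnitary : Matrix m m ℂ) * hA.1.eigenvectorUnitary = 1 :=
    Matrix.mem_unitaryGroup_iff'.mp hA.1.eigenvectorUnitary.2
  conv_rhs => rw [hA.1.spectral_theorem]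
  unfold sqrt
  simp only [Matrix.mul_assoc]
  rw [← Matrix.mul_assoc (star _) (hA.1.eigenvectorUnitary : Matrix m m ℂ), hU',
    Matrix.one_mul, ← Matrix.mul_assoc (Matrix.diagonal _) (Matrix.diagonal _),
    Matrix.diagonal_mul_diagonal]
  rw [show (fun i => ((↑) ∘ Real.sqrt ∘ hA.1.eigenvalues : m → ℂ) i *
      ((↑) ∘ Real.sqrt ∘ hA.1.eigenvalues : m → ℂ) i) = ((↑) ∘ hA.1.eigenvalues : m → ℂ) from
    funext fun i => by
      simp [← Complex.ofReal_mul, Real.mul_self_sqrt (hA.eigenvalues_nonneg i)]]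
  exact (Matrix.mul_assoc _ _ _).symm

end Matrix.PosSemidef

/-- The PSD square root commutes with anything commuting with the original matrix. -/
lemma sqrt_commute {A : Matrix m m ℂ} (hA : A.PosSemidef)
    (B : Matrix m m ℂ) (h : A * B = B * A) : hA.sqrt * B = B * hA.sqrt := by
  set U : Matrix m m ℂ := (hA.1.eigenvectorUnitary : Matrix m m ℂ) with hUdef
  have hU : U * star U = 1 := Matrix.mem_unitaryGroup_iff.mp hA.1.eigenvectorUnitary.2
  have hU' : star U * U = 1 := Matrix.mem_unitaryGroup_iff'.mp hA.1.eigenvectorUnitary.2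
  have hcan1 : ∀ X : Matrix m m ℂ, X * star U * U = X := fun X => by
    rw [Matrix.mul_assoc, hU', Matrix.mul_one]
  have hcan2 : ∀ X : Matrix m m ℂ, X * U * star U = X := fun X => by
    rw [Matrix.mul_assoc, hU, Matrix.mul_one]
  set d : m → ℂ := (↑) ∘ hA.1.eigenvalues with hddef
  set e : m → ℂ := (↑) ∘ Real.sqrt ∘ hA.1.eigenvalues with hedef
  have hspec : A = U * Matrix.diagonal d * star U := hA.1.spectral_theorem
  have hcomm : (star U * B * U) * Matrix.diagonal d = Matrix.diagonal d * (star U * B * U) := by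
    have h3 : B * (U * Matrix.diagonal d * star U) = U * Matrix.diagonal d * star U * B := by
      rw [← hspec, h]
    calc (star U * B * U) * Matrix.diagonal d
        = star U * (B * (U * Matrix.diagonal d * star U)) * U := by
          simp only [← Matrix.mul_assoc]
          rw [hcan1]
      _ = star U * (U * Matrix.diagonal d * star U * B) * U := by rw [h3]
      _ = Matrix.diagonal d * (star U * B * U) := by
          simp only [← Matrix.mul_assoc]
          rw [show star U * U * Matrix.diagonal d = Matrix.diagonal d by
            rw [hU', Matrix.one_mul]]
  have hcomm' : (star U * B * U) * Matrix.diagonal e = Matrix.diagonal e * (star U * B * U) := by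
    refine commute_diagonal_of hcomm fun i j hij => ?_
    have hev : hA.1.eigenvalues i = hA.1.eigenvalues j := Complex.ofReal_inj.mp hij
    show (Real.sqrt (hA.1.eigenvalues i) : ℂ) = (Real.sqrt (hA.1.eigenvalues j) : ℂ)
    rw [hev]
  have hsqrt : hA.sqrt = U * Matrix.diagonal e * star U := rfl
  have hBM : B = U * (star U * B * U) * star U := by
    simp only [← Matrix.mul_assoc]
    rw [show U * star U * B = B by rw [hU, Matrix.one_mul], hcan2]
  rw [hsqrt]
  conv_lhs => rw [hBM]
  conv_rhs => rw [hBM]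
  calc U * Matrix.diagonal e * star U * (U * (star U * B * U) * star U)
      = U * (Matrix.diagonal e * (star U * B * U)) * star U := by
        simp only [← Matrix.mul_assoc]
        rw [hcan1]
    _ = U * ((star U * B * U) * Matrix.diagonal e) * star U := by rw [hcomm']
    _ = U * (star U * B * U) * star U * (U * Matrix.diagonal e * star U) := by
        simp only [← Matrix.mul_assoc]
        rw [hcan1]

/-- The product of two commuting PSD matrices is PSD. -/
lemma posSemidef_mul_of_commute {A B : Matrix m m ℂ} (hA : A.PosSemidef) (hB : B.PosSemidef)
    (h : A * B = B * A) : (A * B).PosSemidef := by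
  have hc := sqrt_commute hA B h
  have key : A * B = hA.sqrtᴴ * B * hA.sqrt := by
    rw [hA.posSemidef_sqrt.isHermitian]
    calc A * B = hA.sqrt * hA.sqrt * B := by rw [hA.sqrt_mul_self]
      _ = hA.sqrt * (hA.sqrt * B) := by rw [Matrix.mul_assoc]
      _ = hA.sqrt * (B * hA.sqrt) := by rw [hc]
      _ = hA.sqrt * B * hA.sqrt := by rw [Matrix.mul_assoc]
  rw [key]
  exact hB.conjTranspose_mul_mul_same _

/-- Trace of a PSD matrix is nonneg (in the complex order). -/
lemma trace_psd_nonneg {M : Matrix m m ℂ} (hM : M.PosSemidef) : 0 ≤ M.trace := by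
  rw [Matrix.trace]
  apply Finset.sum_nonneg
  intro i _
  have h2 := hM.dotProduct_mulVec_nonneg (Pi.single i 1)
  have : dotProduct (star (Pi.single i 1)) (M *ᵥ Pi.single i 1) = M i i := by
    simp [dotProduct, Matrix.mulVec, Pi.single_apply, apply_ite, mul_ite, ite_mul,
      Finset.sum_ite_eq, Finset.sum_ite_eq']
  rw [this] at h2
  simpa [Matrix.diag] using h2

lemma trace_mul_psd_nonneg {P M : Matrix m m ℂ} (hP : P.PosSemidef) (hM : M.PosSemidef) :
    0 ≤ (P * M).trace := by
  have h1 : (P * M).trace = (hP.sqrt * M * hP.sqrt).trace := by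
    conv_lhs => rw [← hP.sqrt_mul_self]
    rw [Matrix.mul_assoc, Matrix.trace_mul_comm]
  rw [h1]
  have h2 := hM.conjTranspose_mul_mul_same hP.sqrt
  rw [hP.posSemidef_sqrt.isHermitian] at h2
  exact trace_psd_nonneg h2

lemma posSemidef_sum {ι : Type*} (s : Finset ι) (f : ι → Matrix m m ℂ)
    (h : ∀ i ∈ s, (f i).PosSemidef) : (∑ i ∈ s, f i).PosSemidef :=
  Finset.sum_induction f _ (fun _ _ ha hb => ha.add hb) Matrix.PosSemidef.zero h

/-- Young-type sum-of-squares identity in a commutative ring. -/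
lemma key_identity {R : Type*} [CommRing R] (x y : R) (s t : ℕ) :
    s • x ^ (s + t) + t • y ^ (s + t) - (s + t) • (x ^ s * y ^ t)
      = (x - y) * (∑ i ∈ Finset.range t, ∑ j ∈ Finset.range s,
          x ^ j * y ^ (t - 1 - i) *
            ∑ k ∈ Finset.range (s + i - j), x ^ k * y ^ (s + i - j - 1 - k)) * (x - y) := by
  symm
  have hterm : ∀ i ∈ Finset.range t, ∀ j ∈ Finset.range s,
      (x - y) * (x ^ j * y ^ (t - 1 - i) *
          ∑ k ∈ Finset.range (s + i - j), x ^ k * y ^ (s + i - j - 1 - k)) * (x - y)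
        = (x ^ (s + i) * y ^ (t - 1 - i) - x ^ j * y ^ (t + s - 1 - j)) * (x - y) := by
    intro i hi j hj
    rw [Finset.mem_range] at hi hj
    have hgeom := geom_sum₂_mul x y (s + i - j)
    have e1 : x ^ j * y ^ (t - 1 - i) * (x ^ (s + i - j) - y ^ (s + i - j))
        = x ^ (s + i) * y ^ (t - 1 - i) - x ^ j * y ^ (t + s - 1 - j) := by
      have hx : x ^ j * x ^ (s + i - j) = x ^ (s + i) := by
        rw [← pow_add]; congr 1; omega
      have hy : y ^ (t - 1 - i) * y ^ (s + i - j) = y ^ (t + s - 1 - j) := by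
        rw [← pow_add]; congr 1; omega
      calc x ^ j * y ^ (t - 1 - i) * (x ^ (s + i - j) - y ^ (s + i - j))
          = x ^ j * x ^ (s + i - j) * y ^ (t - 1 - i)
            - x ^ j * (y ^ (t - 1 - i) * y ^ (s + i - j)) := by ring
        _ = x ^ (s + i) * y ^ (t - 1 - i) - x ^ j * y ^ (t + s - 1 - j) := by rw [hx, hy]
    calc (x - y) * (x ^ j * y ^ (t - 1 - i) *
            ∑ k ∈ Finset.range (s + i - j), x ^ k * y ^ (s + i - j - 1 - k)) * (x - y)
        = x ^ j * y ^ (t - 1 - i) *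
            ((∑ k ∈ Finset.range (s + i - j), x ^ k * y ^ (s + i - j - 1 - k)) * (x - y))
            * (x - y) := by ring
      _ = x ^ j * y ^ (t - 1 - i) * (x ^ (s + i - j) - y ^ (s + i - j)) * (x - y) := by
            rw [hgeom]
      _ = (x ^ (s + i) * y ^ (t - 1 - i) - x ^ j * y ^ (t + s - 1 - j)) * (x - y) := by
            rw [e1]
  calc (x - y) * (∑ i ∈ Finset.range t, ∑ j ∈ Finset.range s,
          x ^ j * y ^ (t - 1 - i) *
            ∑ k ∈ Finset.range (s + i - j), x ^ k * y ^ (s + i - j - 1 - k)) * (x - y)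
      = ∑ i ∈ Finset.range t, ∑ j ∈ Finset.range s,
          (x - y) * (x ^ j * y ^ (t - 1 - i) *
            ∑ k ∈ Finset.range (s + i - j), x ^ k * y ^ (s + i - j - 1 - k)) * (x - y) := by
        rw [Finset.mul_sum, Finset.sum_mul]
        refine Finset.sum_congr rfl fun i _ => ?_
        rw [Finset.mul_sum, Finset.sum_mul]
    _ = ∑ i ∈ Finset.range t, ∑ j ∈ Finset.range s,
          (x ^ (s + i) * y ^ (t - 1 - i) - x ^ j * y ^ (t + s - 1 - j)) * (x - y) := by
        refine Finset.sum_congr rfl fun i hi => Finset.sum_congr rfl fun j hj => ?_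
        exact hterm i hi j hj
    _ = ((∑ i ∈ Finset.range t, ∑ j ∈ Finset.range s,
          (x ^ (s + i) * y ^ (t - 1 - i) - x ^ j * y ^ (t + s - 1 - j)))) * (x - y) := by
        rw [Finset.sum_mul]
        refine Finset.sum_congr rfl fun i _ => ?_
        rw [Finset.sum_mul]
    _ = (s • (x ^ s * ∑ i ∈ Finset.range t, x ^ i * y ^ (t - 1 - i))
          - t • (y ^ t * ∑ j ∈ Finset.range s, x ^ j * y ^ (s - 1 - j))) * (x - y) := by
        congr 1
        have hstep : ∀ i ∈ Finset.range t,
            ∑ j ∈ Finset.range s,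
              (x ^ (s + i) * y ^ (t - 1 - i) - x ^ j * y ^ (t + s - 1 - j))
            = s • (x ^ (s + i) * y ^ (t - 1 - i))
              - ∑ j ∈ Finset.range s, x ^ j * y ^ (t + s - 1 - j) := by
          intro i _
          rw [Finset.sum_sub_distrib, Finset.sum_const, Finset.card_range]
        rw [Finset.sum_congr rfl hstep, Finset.sum_sub_distrib, Finset.sum_const,
          Finset.card_range, ← Finset.smul_sum]
        congr 1
        · congr 1
          rw [Finset.mul_sum]
          refine Finset.sum_congr rfl fun i _ => ?_
          rw [pow_add]; ring
        · congr 1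
          rw [Finset.mul_sum]
          refine Finset.sum_congr rfl fun j hj => ?_
          have hj' : j < s := Finset.mem_range.mp hj
          rw [show t + s - 1 - j = t + (s - 1 - j) by omega, pow_add]
          ring
    _ = s • (x ^ s * (x ^ t - y ^ t)) - t • (y ^ t * (x ^ s - y ^ s)) := by
        rw [sub_mul, smul_mul_assoc, smul_mul_assoc, mul_assoc, mul_assoc,
          geom_sum₂_mul, geom_sum₂_mul]
    _ = s • x ^ (s + t) + t • y ^ (s + t) - (s + t) • (x ^ s * y ^ t) := by
        simp only [nsmul_eq_mul, Nat.cast_add, pow_add]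
        ring
  

lemma matrix_young {A B : Matrix m m ℂ} (hA : A.PosSemidef) (hB : B.PosSemidef)
    (hAB : A * B = B * A) (s t : ℕ) :
    (s • A ^ (s + t) + t • B ^ (s + t) - (s + t) • (A ^ s * B ^ t)).PosSemidef := by
  have hab : Commute A B := hAB
  have hcomm : ∀ x ∈ ({A, B} : Set (Matrix m m ℂ)), ∀ y ∈ ({A, B} : Set (Matrix m m ℂ)),
      x * y = y * x := by
    rintro x (rfl | rfl) y (rfl | rfl)
    · rfl
    · exact hAB
    · exact hAB.symm
    · rfl
  letI : CommRing (Subring.closure ({A, B} : Set (Matrix m m ℂ))) :=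
    Subring.closureCommRingOfComm hcomm
  have haS : A ∈ Subring.closure ({A, B} : Set (Matrix m m ℂ)) :=
    Subring.subset_closure (by left; rfl)
  have hbS : B ∈ Subring.closure ({A, B} : Set (Matrix m m ℂ)) :=
    Subring.subset_closure (by right; rfl)
  have key := key_identity (⟨A, haS⟩ : Subring.closure ({A, B} : Set (Matrix m m ℂ)))
    (⟨B, hbS⟩ : Subring.closure ({A, B} : Set (Matrix m m ℂ))) s t
  have key' := congrArg (Subring.closure ({A, B} : Set (Matrix m m ℂ))).subtype key
  simp only [map_add, map_sub, map_mul, map_pow, map_nsmul, map_sum] at key'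
  rw [show ((Subring.closure ({A, B} : Set (Matrix m m ℂ))).subtype ⟨A, haS⟩) = A from rfl,
    show ((Subring.closure ({A, B} : Set (Matrix m m ℂ))).subtype ⟨B, hbS⟩) = B from rfl] at key'
  rw [key']
  have hMpsd : (∑ i ∈ Finset.range t, ∑ j ∈ Finset.range s,
      A ^ j * B ^ (t - 1 - i) *
        ∑ k ∈ Finset.range (s + i - j), A ^ k * B ^ (s + i - j - 1 - k)).PosSemidef := by
    refine posSemidef_sum _ _ fun i _ => posSemidef_sum _ _ fun j _ => ?_
    have q1 : (A ^ j * B ^ (t - 1 - i)).PosSemidef :=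
      posSemidef_mul_of_commute (hA.pow j) (hB.pow _) (hab.pow_pow _ _).eq
    have q2 : (∑ k ∈ Finset.range (s + i - j), A ^ k * B ^ (s + i - j - 1 - k)).PosSemidef :=
      posSemidef_sum _ _ fun k _ =>
        posSemidef_mul_of_commute (hA.pow k) (hB.pow _) (hab.pow_pow _ _).eq
    have c1 : Commute (A ^ j * B ^ (t - 1 - i))
        (∑ k ∈ Finset.range (s + i - j), A ^ k * B ^ (s + i - j - 1 - k)) := by
      refine Commute.sum_right _ _ _ fun k _ => ?_
      exact (((Commute.refl A).pow_pow j k).mul_right (hab.pow_pow j _)).mul_left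
        (((hab.symm.pow_pow _ k).mul_right ((Commute.refl B).pow_pow _ _)))
    exact posSemidef_mul_of_commute q1 q2 c1.eq
  have h2 := hMpsd.conjTranspose_mul_mul_same (A - B)
  rwa [(hA.1.sub hB.1)] at h2

lemma trace_young {P A B : Matrix m m ℂ} (hP : P.PosSemidef) (hA : A.PosSemidef)
    (hB : B.PosSemidef) (hAB : A * B = B * A) (s t : ℕ) :
    ((s : ℝ) + t) * (P * (A ^ s * B ^ t)).trace.re
      ≤ s * (P * A ^ (s + t)).trace.re + t * (P * B ^ (s + t)).trace.re := by
  have h0 := trace_mul_psd_nonneg hP (matrix_young hA hB hAB s t)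
  rw [Matrix.mul_sub, Matrix.mul_add, Matrix.mul_smul, Matrix.mul_smul, Matrix.mul_smul,
    Matrix.trace_sub, Matrix.trace_add, Matrix.trace_smul, Matrix.trace_smul,
    Matrix.trace_smul] at h0
  have := (Complex.nonneg_iff.mp h0).1
  simp only [Complex.add_re, Complex.sub_re, nsmul_eq_mul, Complex.mul_re,
    Complex.natCast_re, Complex.natCast_im, Nat.cast_add, Complex.add_im,
    zero_mul, sub_zero, Complex.ofReal_re] at this
  push_cast at this ⊢
  linarith

lemma psd_smul {A : Matrix m m ℂ} (hA : A.PosSemidef) {c : ℝ} (hc : 0 ≤ c) :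
    ((c : ℂ) • A).PosSemidef := by
  constructor
  · show ((c : ℂ) • A)ᴴ = (c : ℂ) • A
    rw [Matrix.conjTranspose_smul, hA.1]
    congr 1
    simp [Complex.star_def, Complex.conj_ofReal]
  · exact (hA.smul (show (0 : ℂ) ≤ (c : ℂ) by exact_mod_cast hc)).2

lemma real_opt (s t : ℕ) (hp : 1 ≤ s + t) {T X Y : ℝ} (hT : 0 ≤ T) (hX : 0 ≤ X) (hY : 0 ≤ Y)
    (H : ∀ c d : ℝ, 0 ≤ c → 0 ≤ d →
      ((s : ℝ) + t) * (c ^ s * d ^ t * T) ≤ s * (c ^ (s + t) * X) + t * (d ^ (s + t) * Y)) :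
    T ≤ X ^ ((s : ℝ) / ((s : ℝ) + t)) * Y ^ ((t : ℝ) / ((s : ℝ) + t)) := by
  have hppos : (0 : ℝ) < (s : ℝ) + t := by
    have : (1 : ℝ) ≤ (s : ℝ) + t := by exact_mod_cast hp
    linarith
  rcases Nat.eq_zero_or_pos s with hs0 | hs1
  · subst hs0
    have h1 := H 1 1 zero_le_one zero_le_one
    simp only [Nat.cast_zero, zero_add, one_pow, one_mul, zero_mul] at h1
    have htpos : (0 : ℝ) < (t : ℝ) := by simpa using hppos
    have hTY : T ≤ Y := le_of_mul_le_mul_left (by linarith) htpos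
    simpa [Real.rpow_zero, div_self htpos.ne', Real.rpow_one] using hTY
  rcases Nat.eq_zero_or_pos t with ht0 | ht1
  · subst ht0
    have h1 := H 1 1 zero_le_one zero_le_one
    simp only [Nat.cast_zero, add_zero, one_pow, one_mul, mul_one, zero_mul] at h1
    have hspos : (0 : ℝ) < (s : ℝ) := by simpa using hppos
    have hTX : T ≤ X := le_of_mul_le_mul_left (by linarith) hspos
    simpa [Real.rpow_zero, div_self hspos.ne', Real.rpow_one] using hTX
  -- now 1 ≤ s, 1 ≤ t
  have hsR : (0 : ℝ) < s := by exact_mod_cast hs1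
  have htR : (0 : ℝ) < t := by exact_mod_cast ht1
  rcases eq_or_lt_of_le hX with hX0 | hXpos
  · -- X = 0 : show T = 0
    have hT0 : T = 0 := by
      by_contra hne
      have hTpos : 0 < T := hT.lt_of_ne (Ne.symm hne)
      set c : ℝ := t * Y / (((s : ℝ) + t) * T) + 1 with hc
      have hfrac : 0 ≤ t * Y / (((s : ℝ) + t) * T) := by positivity
      have hc1 : 1 ≤ c := by rw [hc]; linarith
      have hcs : c ≤ c ^ s := le_self_pow₀ (by linarith) (by omega)
      have h1 := H c 1 (by linarith) zero_le_one
      rw [← hX0] at h1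
      simp only [one_pow, mul_one, mul_zero, zero_add] at h1
      have h2 : ((s : ℝ) + t) * (c ^ s * T) ≤ t * Y := by nlinarith
      have h3 : ((s : ℝ) + t) * (c * T) ≤ ((s : ℝ) + t) * (c ^ s * T) :=
        mul_le_mul_of_nonneg_left (mul_le_mul_of_nonneg_right hcs hT) hppos.le
      have h4 : ((s : ℝ) + t) * (c * T) = t * Y + ((s : ℝ) + t) * T := by
        rw [hc]; field_simp
      nlinarith [mul_pos hppos hTpos]
    rw [hT0, ← hX0, Real.zero_rpow (by positivity : (s : ℝ) / ((s : ℝ) + t) ≠ 0)]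
    · rw [zero_mul]
  rcases eq_or_lt_of_le hY with hY0 | hYpos
  · have hT0 : T = 0 := by
      by_contra hne
      have hTpos : 0 < T := hT.lt_of_ne (Ne.symm hne)
      set c : ℝ := s * X / (((s : ℝ) + t) * T) + 1 with hc
      have hfrac : 0 ≤ s * X / (((s : ℝ) + t) * T) := by positivity
      have hc1 : 1 ≤ c := by rw [hc]; linarith
      have hcs : c ≤ c ^ t := le_self_pow₀ (by linarith) (by omega)
      have h1 := H 1 c zero_le_one (by linarith)
      rw [← hY0] at h1
      simp only [one_pow, one_mul, mul_zero, mul_one, add_zero] at h1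
      have h2 : ((s : ℝ) + t) * (c ^ t * T) ≤ s * X := by nlinarith
      have h3 : ((s : ℝ) + t) * (c * T) ≤ ((s : ℝ) + t) * (c ^ t * T) :=
        mul_le_mul_of_nonneg_left (mul_le_mul_of_nonneg_right hcs hT) hppos.le
      have h4 : ((s : ℝ) + t) * (c * T) = s * X + ((s : ℝ) + t) * T := by
        rw [hc]; field_simp
      nlinarith [mul_pos hppos hTpos]
    rw [hT0, ← hY0, Real.zero_rpow (by positivity : (t : ℝ) / ((s : ℝ) + t) ≠ 0)]
    rw [mul_zero]
  -- main case X, Y > 0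
  set p : ℝ := (s : ℝ) + t with hpdef
  set c : ℝ := X ^ (-(1 / p)) with hcdef
  set d : ℝ := Y ^ (-(1 / p)) with hddef
  have hc0 : 0 ≤ c := Real.rpow_nonneg hX _
  have hd0 : 0 ≤ d := Real.rpow_nonneg hY _
  have hcpow : ∀ k : ℕ, c ^ k = X ^ (-(k / p) : ℝ) := by
    intro k
    rw [hcdef, ← Real.rpow_natCast (X ^ (-(1 / p))) k, ← Real.rpow_mul hX]
    congr 1
    ring
  have hdpow : ∀ k : ℕ, d ^ k = Y ^ (-(k / p) : ℝ) := by
    intro k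
    rw [hddef, ← Real.rpow_natCast (Y ^ (-(1 / p))) k, ← Real.rpow_mul hY]
    congr 1
    ring
  have h1 := H c d hc0 hd0
  rw [hcpow s, hdpow t, hcpow (s + t), hdpow (s + t)] at h1
  have hXp : X ^ (-(((s : ℕ) + t : ℕ) / p) : ℝ) * X = 1 := by
    push_cast
    rw [show (-((((s : ℝ) + t)) / p)) = (-1 : ℝ) by rw [hpdef]; field_simp]
    rw [Real.rpow_neg_one]
    exact inv_mul_cancel₀ hXpos.ne'
  have hYp : Y ^ (-(((s : ℕ) + t : ℕ) / p) : ℝ) * Y = 1 := by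
    push_cast
    rw [show (-((((s : ℝ) + t)) / p)) = (-1 : ℝ) by rw [hpdef]; field_simp]
    rw [Real.rpow_neg_one]
    exact inv_mul_cancel₀ hYpos.ne'
  rw [hXp, hYp] at h1
  have h2 : X ^ (-((s : ℝ) / p)) * Y ^ (-((t : ℝ) / p)) * T ≤ 1 := by
    have hh : p * (X ^ (-((s : ℝ) / p)) * Y ^ (-((t : ℝ) / p)) * T) ≤ p * 1 := by
      calc p * (X ^ (-((s : ℝ) / p)) * Y ^ (-((t : ℝ) / p)) * T)
          ≤ (s : ℝ) * 1 + (t : ℝ) * 1 := h1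
        _ = p * 1 := by rw [hpdef]; ring
    exact le_of_mul_le_mul_left hh hppos
  have hidX : X ^ ((s : ℝ) / p) * X ^ (-((s : ℝ) / p)) = 1 := by
    rw [← Real.rpow_add hXpos]
    simp
  have hidY : Y ^ ((t : ℝ) / p) * Y ^ (-((t : ℝ) / p)) = 1 := by
    rw [← Real.rpow_add hYpos]
    simp
  have hPpos : 0 < X ^ ((s : ℝ) / p) * Y ^ ((t : ℝ) / p) := by positivity
  calc T = (X ^ ((s : ℝ) / p) * X ^ (-((s : ℝ) / p))) *
            ((Y ^ ((t : ℝ) / p) * Y ^ (-((t : ℝ) / p))) * T) := by rw [hidX, hidY]; ring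
    _ = (X ^ ((s : ℝ) / p) * Y ^ ((t : ℝ) / p)) *
          (X ^ (-((s : ℝ) / p)) * Y ^ (-((t : ℝ) / p)) * T) := by ring
    _ ≤ (X ^ ((s : ℝ) / p) * Y ^ ((t : ℝ) / p)) * 1 := by
        exact mul_le_mul_of_nonneg_left h2 hPpos.le
    _ = X ^ ((s : ℝ) / p) * Y ^ ((t : ℝ) / p) := by ring

/-- Two-factor trace Hölder inequality: for PSD matrices `ρ, A, B` with
`AB = BA` and naturals `s ≤ p`, `p ≥ 1`, the trace `tr(ρ·Aˢ·B^(p−s))` is a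
nonnegative real and is at most `tr(ρ·A^p)^(s/p) · tr(ρ·B^p)^((p−s)/p)`. -/
theorem stmt_6 {n : ℕ} (hn : 1 ≤ n)
    (ρ A B : Matrix (Fin n) (Fin n) ℂ)
    (hρ : ρ.PosSemidef) (hA : A.PosSemidef) (hB : B.PosSemidef)
    (hAB : A * B = B * A)
    (s p : ℕ) (hsp : s ≤ p) (hp : 1 ≤ p) :
    0 ≤ (ρ * (A ^ s * B ^ (p - s))).trace.re ∧
    (ρ * (A ^ s * B ^ (p - s))).trace.im = 0 ∧
    (ρ * (A ^ s * B ^ (p - s))).trace.re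
      ≤ ((ρ * A ^ p).trace.re) ^ ((s : ℝ) / (p : ℝ))
        * ((ρ * B ^ p).trace.re) ^ (((p : ℝ) - (s : ℝ)) / (p : ℝ)) := by
  obtain ⟨t, rfl⟩ : ∃ t, p = s + t := ⟨p - s, by omega⟩
  rw [show s + t - s = t by omega]
  have hab : Commute A B := hAB
  have hprod : (A ^ s * B ^ t).PosSemidef :=
    posSemidef_mul_of_commute (hA.pow s) (hB.pow t) (hab.pow_pow s t).eq
  have h0 := Complex.nonneg_iff.mp (trace_mul_psd_nonneg hρ hprod)
  refine ⟨h0.1, h0.2.symm, ?_⟩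
  have hX := (Complex.nonneg_iff.mp (trace_mul_psd_nonneg hρ (hA.pow (s + t)))).1
  have hY := (Complex.nonneg_iff.mp (trace_mul_psd_nonneg hρ (hB.pow (s + t)))).1
  have H : ∀ c d : ℝ, 0 ≤ c → 0 ≤ d →
      ((s : ℝ) + t) * (c ^ s * d ^ t * (ρ * (A ^ s * B ^ t)).trace.re)
        ≤ s * (c ^ (s + t) * (ρ * A ^ (s + t)).trace.re)
          + t * (d ^ (s + t) * (ρ * B ^ (s + t)).trace.re) := by
    intro c d hc hd
    have hA' := psd_smul hA hc
    have hB' := psd_smul hB hd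
    have hAB' : ((c : ℂ) • A) * ((d : ℂ) • B) = ((d : ℂ) • B) * ((c : ℂ) • A) := by
      rw [Matrix.smul_mul, Matrix.mul_smul, Matrix.smul_mul, Matrix.mul_smul, hAB, smul_comm]
    have key := trace_young hρ hA' hB' hAB' s t
    have e0 : ∀ (M : Matrix (Fin n) (Fin n) ℂ) (r : ℝ),
        (ρ * ((r : ℂ) • M)).trace.re = r * (ρ * M).trace.re := by
      intro M r
      rw [Matrix.mul_smul, Matrix.trace_smul, smul_eq_mul, Complex.re_ofReal_mul]
    have e1 : ((c : ℂ) • A) ^ s * ((d : ℂ) • B) ^ t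
        = ((c ^ s * d ^ t : ℝ) : ℂ) • (A ^ s * B ^ t) := by
      rw [smul_pow, smul_pow, Matrix.smul_mul, Matrix.mul_smul, smul_smul]
      congr 1
      push_cast
      ring
    have e2 : ((c : ℂ) • A) ^ (s + t) = ((c ^ (s + t) : ℝ) : ℂ) • A ^ (s + t) := by
      rw [smul_pow]
      congr 1
      push_cast
      ring
    have e3 : ((d : ℂ) • B) ^ (s + t) = ((d ^ (s + t) : ℝ) : ℂ) • B ^ (s + t) := by
      rw [smul_pow]
      congr 1
      push_cast
      ring
    rw [e1, e2, e3, e0, e0, e0] at key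
    calc ((s : ℝ) + t) * (c ^ s * d ^ t * (ρ * (A ^ s * B ^ t)).trace.re)
        = ((s : ℝ) + t) * (c ^ s * d ^ t * (ρ * (A ^ s * B ^ t)).trace.re) := rfl
      _ ≤ s * (c ^ (s + t) * (ρ * A ^ (s + t)).trace.re)
          + t * (d ^ (s + t) * (ρ * B ^ (s + t)).trace.re) := by
          have := key
          nlinarith [key]
  have final := real_opt s t (by omega) h0.1 hX hY H
  rw [show (((s + t : ℕ) : ℝ)) = (s : ℝ) + (t : ℝ) by push_cast; ring, add_sub_cancel_left]
  exact final
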